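/- If Σ admits a Mal'cev term, then F_Σ weakly preserves all pullbacks of epimorphisms: for surjections f₁ : A₁ → C and f₂ : A₂ → C with pullback (P, p₁, p₂), and any u₁ ∈ F_Σ(A₁), u₂ ∈ F_Σ(A₂) with (F_Σ f₁)(u₁) = (F_Σ f₂)(u₂), there exists w ∈ F_Σ(P) with (F_Σ p₁)(w) = u₁ and (F_Σ p₂)(w) = u₂. -/
import Mathlib


universe u

/-- A finitary algebraic signature. -/
structure Sig where
  ops : Type
  ar : ops → ℕ

namespace UA

/-- Terms over the signature `S` with variables from `X`. -/
inductive Term (S : Sig) (X : Type) : Type where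
  | var : X → Term S X
  | app : (o : S.ops) → (Fin (S.ar o) → Term S X) → Term S X

/-- Simultaneous substitution of terms for variables. -/
def Term.subst {S : Sig} {X Y : Type} (σ : X → Term S Y) : Term S X → Term S Y
  | .var x => σ x
  | .app o ts => .app o fun i => (ts i).subst σ

/-- Renaming (substitution of variables for variables). -/
def Term.rename {S : Sig} {X Y : Type} (φ : X → Y) (t : Term S X) : Term S Y :=
  t.subst fun x => .var (φ x)

/-- Equational provability from the set `Γ` of axioms (pairs of terms over the
countable variable set `ℕ`), over arbitrary variable sets. -/
inductive Eqv {S : Sig} (Γ : Set (Term S ℕ × Term S ℕ)) :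
    {X : Type} → Term S X → Term S X → Prop where
  | axm {X : Type} {l r : Term S ℕ} (h : (l, r) ∈ Γ) (σ : ℕ → Term S X) :
      Eqv Γ (l.subst σ) (r.subst σ)
  | refl {X : Type} (t : Term S X) : Eqv Γ t t
  | symm {X : Type} {t u : Term S X} : Eqv Γ t u → Eqv Γ u t
  | trans {X : Type} {t u v : Term S X} : Eqv Γ t u → Eqv Γ u v → Eqv Γ t v
  | congr {X : Type} (o : S.ops) {ts us : Fin (S.ar o) → Term S X} :
      (∀ i, Eqv Γ (ts i) (us i)) → Eqv Γ (.app o ts) (.app o us)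
  | sbst {X Y : Type} {t u : Term S X} (σ : X → Term S Y) :
      Eqv Γ t u → Eqv Γ (t.subst σ) (u.subst σ)

def termSetoid {S : Sig} (Γ : Set (Term S ℕ × Term S ℕ)) (X : Type) : Setoid (Term S X) :=
  ⟨Eqv Γ, ⟨fun t => .refl t, fun h => h.symm, fun h h' => h.trans h'⟩⟩

/-- The free algebra over the variable set `X` in the variety axiomatized by `Γ`:
terms modulo `Γ`-provable equality.  This is the object part of the free-algebra
functor `F_Σ`. -/
def FreeAlg {S : Sig} (Γ : Set (Term S ℕ × Term S ℕ)) (X : Type) : Type :=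
  Quotient (termSetoid Γ X)

/-- The action of the free-algebra functor `F_Σ` on maps: variable substitution. -/
def FreeAlg.map {S : Sig} {Γ : Set (Term S ℕ × Term S ℕ)} {X Y : Type} (φ : X → Y) :
    FreeAlg Γ X → FreeAlg Γ Y :=
  Quotient.map (Term.rename φ) fun _ _ h => h.sbst _

end UA

namespace UA

variable {S : Sig}

theorem Term.subst_subst {X Y Z : Type} (σ : X → Term S Y) (τ : Y → Term S Z)
    (t : Term S X) : (t.subst σ).subst τ = t.subst (fun x => (σ x).subst τ) := by
  induction t with
  | var x => rfl
  | app o ts ih => simp only [Term.subst]; exact congrArg _ (funext ih)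

theorem Term.rename_id {X : Type} (t : Term S X) : t.rename (fun x => x) = t := by
  induction t with
  | var x => rfl
  | app o ts ih => simp only [Term.rename, Term.subst]; exact congrArg _ (funext ih)

theorem Term.rename_rename {X Y Z : Type} (φ : X → Y) (ψ : Y → Z) (t : Term S X) :
    (t.rename φ).rename ψ = t.rename (fun x => ψ (φ x)) := by
  show (t.subst _).subst _ = _
  rw [Term.subst_subst]
  rfl

theorem Eqv.subst_congr {Γ : Set (Term S ℕ × Term S ℕ)} {X Y : Type}
    {σ τ : X → Term S Y} (h : ∀ x, Eqv Γ (σ x) (τ x)) (t : Term S X) :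
    Eqv Γ (t.subst σ) (t.subst τ) := by
  induction t with
  | var x => exact h x
  | app o ts ih => exact .congr o ih

/-- Apply the Mal'cev term to three terms. -/
def mApp (m : Term S (Fin 3)) {X : Type} (a b c : Term S X) : Term S X :=
  m.subst ![a, b, c]

theorem mApp_rename (m : Term S (Fin 3)) {X Y : Type} (φ : X → Y) (a b c : Term S X) :
    (mApp m a b c).rename φ = mApp m (a.rename φ) (b.rename φ) (c.rename φ) := by
  show (m.subst _).subst _ = _
  rw [Term.subst_subst]
  refine congrFun (congrArg Term.subst (funext fun i => ?_)) m
  fin_cases i <;> rfl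

theorem mApp_left {Γ : Set (Term S ℕ × Term S ℕ)} {m : Term S (Fin 3)}
    (hm₁ : Eqv Γ (m.rename ![0, 1, 1]) (Term.var 0 : Term S ℕ))
    {X : Type} (a b : Term S X) : Eqv Γ (mApp m a b b) a := by
  have := hm₁.sbst (fun n => if n = 0 then a else b)
  have e : ((m.rename ![0, 1, 1]).subst (fun n => if n = 0 then a else b))
      = mApp m a b b := by
    show (m.subst _).subst _ = _
    rw [Term.subst_subst]
    refine congrFun (congrArg Term.subst (funext fun i => ?_)) m
    fin_cases i <;> rfl
  rwa [e] at this

theorem mApp_right {Γ : Set (Term S ℕ × Term S ℕ)} {m : Term S (Fin 3)}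
    (hm₂ : Eqv Γ (m.rename ![0, 0, 1]) (Term.var 1 : Term S ℕ))
    {X : Type} (a b : Term S X) : Eqv Γ (mApp m a a b) b := by
  have := hm₂.sbst (fun n => if n = 0 then a else b)
  have e : ((m.rename ![0, 0, 1]).subst (fun n => if n = 0 then a else b))
      = mApp m a a b := by
    show (m.subst _).subst _ = _
    rw [Term.subst_subst]
    refine congrFun (congrArg Term.subst (funext fun i => ?_)) m
    fin_cases i <;> rfl
  rwa [e] at this

/-- If the variety of `Γ` has a Mal'cev term, then the free-algebra functor `F_Σ`
weakly preserves all pullbacks of epis: for surjections `f₁ : A₁ → C`, `f₂ : A₂ → C`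
with pullback `P` and `u₁ ∈ F_Σ A₁`, `u₂ ∈ F_Σ A₂` with `(F_Σ f₁) u₁ = (F_Σ f₂) u₂`,
there is `w ∈ F_Σ P` projecting to `u₁` and `u₂`. -/
theorem malcev_implies_weakly_preserves_epi_pullbacks
    (Γ : Set (Term S ℕ × Term S ℕ)) (m : Term S (Fin 3))
    (hm₁ : Eqv Γ (m.rename ![0, 1, 1]) (Term.var 0 : Term S ℕ))
    (hm₂ : Eqv Γ (m.rename ![0, 0, 1]) (Term.var 1 : Term S ℕ))
    {A₁ A₂ C : Type} (f₁ : A₁ → C) (f₂ : A₂ → C)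
    (hf₁ : Function.Surjective f₁) (hf₂ : Function.Surjective f₂)
    (u₁ : FreeAlg Γ A₁) (u₂ : FreeAlg Γ A₂)
    (h : FreeAlg.map f₁ u₁ = FreeAlg.map f₂ u₂) :
    ∃ w : FreeAlg Γ {a : A₁ × A₂ // f₁ a.1 = f₂ a.2},
      FreeAlg.map (fun k => k.1.1) w = u₁ ∧ FreeAlg.map (fun k => k.1.2) w = u₂ := by
  classical
  obtain ⟨t₁, rfl⟩ := Quotient.exists_rep u₁
  obtain ⟨t₂, rfl⟩ := Quotient.exists_rep u₂
  have he : Eqv Γ (t₁.rename f₁) (t₂.rename f₂) := Quotient.exact h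
  set P := {a : A₁ × A₂ // f₁ a.1 = f₂ a.2}
  let g₁ : C → A₁ := Function.surjInv hf₁
  let g₂ : C → A₂ := Function.surjInv hf₂
  have hg₁ : ∀ c, f₁ (g₁ c) = c := Function.surjInv_eq hf₁
  have hg₂ : ∀ c, f₂ (g₂ c) = c := Function.surjInv_eq hf₂
  let l₁ : A₁ → P := fun a => ⟨(a, g₂ (f₁ a)), (hg₂ (f₁ a)).symm⟩
  let l₂ : A₂ → P := fun a => ⟨(g₁ (f₂ a), a), hg₁ (f₂ a)⟩
  let μ : C → P := fun c => ⟨(g₁ c, g₂ c), by rw [hg₁, hg₂]⟩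
  let W : Term S P := mApp m (t₁.rename l₁) ((t₁.rename f₁).rename μ) (t₂.rename l₂)
  refine ⟨⟦W⟧, ?_, ?_⟩
  · apply Quotient.sound
    show Eqv Γ (W.rename fun k => k.1.1) t₁
    rw [show (W.rename fun k => k.1.1)
        = mApp m t₁ ((t₁.rename f₁).rename g₁) ((t₂.rename f₂).rename g₁) by
      simp only [W]
      rw [mApp_rename]
      simp only [Term.rename_rename]
      exact congrArg (fun x => mApp m x (t₁.rename fun x => g₁ (f₁ x))
        (t₂.rename fun x => g₁ (f₂ x))) (Term.rename_id t₁)]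
    refine Eqv.trans (Eqv.subst_congr
      (σ := ![t₁, (t₁.rename f₁).rename g₁, (t₂.rename f₂).rename g₁])
      (τ := ![t₁, (t₁.rename f₁).rename g₁, (t₁.rename f₁).rename g₁]) ?_ m) ?_
    · intro i
      fin_cases i
      · exact .refl _
      · exact .refl _
      · exact (he.sbst (fun c => Term.var (g₁ c))).symm
    · exact mApp_left hm₁ _ _
  · apply Quotient.sound
    show Eqv Γ (W.rename fun k => k.1.2) t₂
    rw [show (W.rename fun k => k.1.2)
        = mApp m ((t₁.rename f₁).rename g₂) ((t₁.rename f₁).rename g₂) t₂ by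
      simp only [W]
      rw [mApp_rename]
      simp only [Term.rename_rename]
      exact congrArg (mApp m (t₁.rename fun x => g₂ (f₁ x))
        (t₁.rename fun x => g₂ (f₁ x))) (Term.rename_id t₂)]
    exact mApp_right hm₂ _ _

end UA
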